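/- (Monotone iteration bound (3.1) in the proof of Theorem 1.2(i).) Let h, l : [0,∞) → [0,∞) be continuous and let f, g : [0,∞) → [0,∞) be locally Lipschitz with f(0) = g(0) = 0. Let m > 0 be such that f, g, s ↦ f(s)/s and s ↦ g(s)/s are nondecreasing on (0,m]. Let v₀ ∈ C_b(ℝ^N) be nonnegative, v₀ ≢ 0, with ‖v₀‖_∞ ≤ m, and let β > 0 satisfy ∫_0^∞ h(σ)·f(‖S(σ)v₀‖_∞)/‖S(σ)v₀‖_∞ dσ + ∫_0^∞ l(σ)·g(‖S(σ)v₀‖_∞)/‖S(σ)v₀‖_∞ dσ ≤ β/(β+1). Let 0 < δ < (1/(β+1))·min{1, m/‖v₀‖_∞} and set u₀ = δ v₀. Define the iterates u⁰(t) = S(t)u₀ and u^{k+1}(t) = S(t)u₀ + ∫_0^t S(t−σ)[h(σ)f(u^k(σ)) + l(σ)g(u^k(σ))] dσ for k ≥ 0. Then for every k ≥ 0, every t > 0 and every x ∈ ℝ^N one has 0 ≤ u^k(t)(x) ≤ u^{k+1}(t)(x) ≤ (1+β)·S(t)u₀(x). -/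

import Mathlib

open MeasureTheory Real Set Metric Filter

noncomputable section

/-- `ℝ^N`. -/
abbrev EucN (N : ℕ) := EuclideanSpace ℝ (Fin N)

/-- `C_b(ℝ^N)`, the bounded continuous functions with the sup norm. -/
abbrev CbN (N : ℕ) := BoundedContinuousFunction (EucN N) ℝ

namespace MIB

variable {N : ℕ} {Γ : EucN N → EucN N → ℝ → ℝ}

def clamp (m s : ℝ) : ℝ := max 0 (min s m)

lemma clamp_eq {m s : ℝ} (h0 : 0 ≤ s) (hm : s ≤ m) : clamp m s = s := by
  simp [clamp, min_eq_left hm, max_eq_right h0]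

lemma clamp_nonneg (m s : ℝ) : 0 ≤ clamp m s := le_max_left _ _

lemma clamp_le {m : ℝ} (hm : 0 ≤ m) (s : ℝ) : clamp m s ≤ m :=
  max_le hm (min_le_right _ _)

lemma clamp_mono (m : ℝ) {s s' : ℝ} (hss' : s ≤ s') : clamp m s ≤ clamp m s' :=
  max_le_max le_rfl (min_le_min_right _ hss')

lemma continuous_clamp (m : ℝ) : Continuous (clamp m) :=
  continuous_const.max ((continuous_id.min continuous_const))

lemma measΓ (hΓ : Measurable fun p : EucN N × EucN N × ℝ => Γ p.1 p.2.1 p.2.2)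
    {α : Type} [MeasurableSpace α] {a b : α → EucN N} {c : α → ℝ}
    (ha : Measurable a) (hb : Measurable b) (hc : Measurable c) :
    Measurable fun q => Γ (a q) (b q) (c q) :=
  hΓ.comp (ha.prodMk (hb.prodMk hc))

lemma kernel_integrable (hΓ : Measurable fun p : EucN N × EucN N × ℝ => Γ p.1 p.2.1 p.2.2)
    (hK1y : ∀ (x : EucN N) (t : ℝ), 0 < t → ∫ y, Γ x y t = 1)
    (x : EucN N) (t : ℝ) (ht : 0 < t) : Integrable (fun y => Γ x y t) := by
  by_contra hni
  have := integral_undef hni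
  rw [hK1y x t ht] at this
  norm_num at this

lemma kernel_lintegral (hΓ : Measurable fun p : EucN N × EucN N × ℝ => Γ p.1 p.2.1 p.2.2)
    (hK1y : ∀ (x : EucN N) (t : ℝ), 0 < t → ∫ y, Γ x y t = 1)
    (hΓnn : ∀ (x y : EucN N) (t : ℝ), 0 < t → 0 ≤ Γ x y t)
    (x : EucN N) (t : ℝ) (ht : 0 < t) :
    ∫⁻ y, ENNReal.ofReal (Γ x y t) = 1 := by
  rw [← ofReal_integral_eq_lintegral_ofReal (kernel_integrable hΓ hK1y x t ht)
    (Filter.Eventually.of_forall fun y => hΓnn x y t ht), hK1y x t ht]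
  simp

/-- joint measurability in the parameter of a convolution with the kernel -/
lemma conv_measurable (hΓ : Measurable fun p : EucN N × EucN N × ℝ => Γ p.1 p.2.1 p.2.2)
    {φ : EucN N → ℝ} (hφm : Measurable φ) (t : ℝ) :
    Measurable fun x : EucN N => ∫ z, Γ x z t * φ z := by
  have : Measurable fun q : EucN N × EucN N => Γ q.1 q.2 t * φ q.2 :=
    (measΓ hΓ measurable_fst measurable_snd measurable_const).mul (hφm.comp measurable_snd)
  exact this.stronglyMeasurable.integral_prod_right'.measurable

lemma conv_integrable (hΓ : Measurable fun p : EucN N × EucN N × ℝ => Γ p.1 p.2.1 p.2.2)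
    (hK1y : ∀ (x : EucN N) (t : ℝ), 0 < t → ∫ y, Γ x y t = 1)
    (hΓnn : ∀ (x y : EucN N) (t : ℝ), 0 < t → 0 ≤ Γ x y t)
    {ψ : EucN N → ℝ} (hψm : Measurable ψ) {C : ℝ}
    (hψnn : ∀ y, 0 ≤ ψ y) (hψC : ∀ y, ψ y ≤ C)
    (x : EucN N) (t : ℝ) (ht : 0 < t) :
    Integrable (fun y => Γ x y t * ψ y) := by
  refine Integrable.mono' ((kernel_integrable hΓ hK1y x t ht).const_mul C)
    ((measΓ hΓ measurable_const measurable_id measurable_const).mul hψm).aestronglyMeasurable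
    (Filter.Eventually.of_forall fun y => ?_)
  rw [Real.norm_eq_abs, abs_of_nonneg (mul_nonneg (hΓnn x y t ht) (hψnn y)), mul_comm C _]
  exact mul_le_mul_of_nonneg_left (hψC y) (hΓnn x y t ht)

lemma conv_le (hΓ : Measurable fun p : EucN N × EucN N × ℝ => Γ p.1 p.2.1 p.2.2)
    (hK1y : ∀ (x : EucN N) (t : ℝ), 0 < t → ∫ y, Γ x y t = 1)
    (hΓnn : ∀ (x y : EucN N) (t : ℝ), 0 < t → 0 ≤ Γ x y t)
    {ψ : EucN N → ℝ} {C : ℝ} (hψnn : ∀ y, 0 ≤ ψ y) (hψC : ∀ y, ψ y ≤ C)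
    (x : EucN N) (t : ℝ) (ht : 0 < t) :
    ∫ y, Γ x y t * ψ y ≤ C := by
  calc ∫ y, Γ x y t * ψ y ≤ ∫ y, Γ x y t * C := by
        refine integral_mono_of_nonneg ?_ ((kernel_integrable hΓ hK1y x t ht).mul_const C) ?_
        · exact Filter.Eventually.of_forall fun y =>
            mul_nonneg (hΓnn x y t ht) (hψnn y)
        · exact Filter.Eventually.of_forall fun y =>
            mul_le_mul_of_nonneg_left (hψC y) (hΓnn x y t ht)
    _ = C := by rw [integral_mul_const, hK1y x t ht, one_mul]

lemma conv_pos (hΓ : Measurable fun p : EucN N × EucN N × ℝ => Γ p.1 p.2.1 p.2.2)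
    (hK1y : ∀ (x : EucN N) (t : ℝ), 0 < t → ∫ y, Γ x y t = 1)
    (hΓpos : ∀ (x y : EucN N) (t : ℝ), 0 < t → 0 < Γ x y t)
    {v : EucN N → ℝ} (hvc : Continuous v) (hvnn : ∀ y, 0 ≤ v y)
    {C : ℝ} (hvC : ∀ y, v y ≤ C)
    {x₀ : EucN N} (hx₀ : 0 < v x₀)
    (x : EucN N) (t : ℝ) (ht : 0 < t) :
    0 < ∫ y, Γ x y t * v y := by
  have hΓnn : ∀ (x y : EucN N) (t : ℝ), 0 < t → 0 ≤ Γ x y t :=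
    fun x y t ht => (hΓpos x y t ht).le
  have hint : Integrable (fun y => Γ x y t * v y) :=
    conv_integrable hΓ hK1y hΓnn hvc.measurable hvnn hvC x t ht
  rw [integral_pos_iff_support_of_nonneg
    (fun y => mul_nonneg (hΓnn x y t ht) (hvnn y)) hint]
  have hopen : IsOpen {y | 0 < v y} := isOpen_lt continuous_const hvc
  obtain ⟨r, hr, hball⟩ := Metric.isOpen_iff.1 hopen x₀ hx₀
  calc (0 : ENNReal) < volume (Metric.ball x₀ r) := measure_ball_pos _ _ hr
    _ ≤ volume (Function.support fun y => Γ x y t * v y) := by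
        apply measure_mono
        intro y hy
        exact ne_of_gt (mul_pos (hΓpos x y t ht) (hball hy))

lemma kernel_semigroup (hΓ : Measurable fun p : EucN N × EucN N × ℝ => Γ p.1 p.2.1 p.2.2)
    (hK1y : ∀ (x : EucN N) (t : ℝ), 0 < t → ∫ y, Γ x y t = 1)
    (hK2 : ∀ (x y : EucN N) (s t : ℝ), 0 < s → s < t →
      Γ x y t = ∫ ξ, Γ x ξ (t - s) * Γ ξ y s)
    (hΓnn : ∀ (x y : EucN N) (t : ℝ), 0 < t → 0 ≤ Γ x y t)
    (φ : EucN N → ℝ) (hφm : Measurable φ) (hφnn : ∀ z, 0 ≤ φ z)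
    (B : ℝ) (hφB : ∀ z, φ z ≤ B)
    (x : EucN N) (t σ : ℝ) (hσ : 0 < σ) (hσt : σ < t) :
    ∫ ξ, Γ x ξ (t - σ) * ∫ y, Γ ξ y σ * φ y = ∫ y, Γ x y t * φ y := by
  have hts : 0 < t - σ := by linarith
  set F : EucN N → EucN N → ℝ := fun ξ y => Γ x ξ (t - σ) * (Γ ξ y σ * φ y) with hF
  have hFm : Measurable (Function.uncurry F) := by
    exact (measΓ hΓ measurable_const measurable_fst measurable_const).mul
      ((measΓ hΓ measurable_fst measurable_snd measurable_const).mul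
        (hφm.comp measurable_snd))
  have hFnn : ∀ ξ y, 0 ≤ F ξ y := fun ξ y =>
    mul_nonneg (hΓnn _ _ _ hts) (mul_nonneg (hΓnn _ _ _ hσ) (hφnn y))
  have hB0 : 0 ≤ B := le_trans (hφnn (0 : EucN N)) (hφB _)
  have hFint : Integrable (Function.uncurry F) ((volume : Measure (EucN N)).prod volume) := by
    refine ⟨hFm.aestronglyMeasurable, ?_⟩
    refine (hasFiniteIntegral_iff_ofReal (μ := (volume : Measure (EucN N)).prod volume)
      (f := Function.uncurry F) (Filter.Eventually.of_forall
      fun p : EucN N × EucN N => hFnn p.1 p.2)).mpr ?_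
    have hlp : (∫⁻ p : EucN N × EucN N, ENNReal.ofReal (Function.uncurry F p)
        ∂((volume : Measure (EucN N)).prod volume))
        = ∫⁻ ξ, ∫⁻ y, ENNReal.ofReal (F ξ y) :=
      lintegral_prod _ (by exact (ENNReal.measurable_ofReal.comp hFm).aemeasurable)
    rw [hlp]
    have hbound : ∀ ξ, (∫⁻ y, ENNReal.ofReal (F ξ y)) ≤
        ENNReal.ofReal (Γ x ξ (t - σ)) * ENNReal.ofReal B := by
      intro ξ
      have : ∀ y, ENNReal.ofReal (F ξ y) ≤
          ENNReal.ofReal (Γ x ξ (t - σ)) * (ENNReal.ofReal (Γ ξ y σ) * ENNReal.ofReal B) := by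
        intro y
        rw [hF]
        calc ENNReal.ofReal (Γ x ξ (t - σ) * (Γ ξ y σ * φ y))
            ≤ ENNReal.ofReal (Γ x ξ (t - σ) * (Γ ξ y σ * B)) := by
              apply ENNReal.ofReal_le_ofReal
              gcongr
              · exact hΓnn _ _ _ hts
              · exact hΓnn _ _ _ hσ
              · exact hφB y
          _ = ENNReal.ofReal (Γ x ξ (t - σ)) * (ENNReal.ofReal (Γ ξ y σ) * ENNReal.ofReal B) := by
              rw [ENNReal.ofReal_mul (hΓnn _ _ _ hts), ENNReal.ofReal_mul (hΓnn _ _ _ hσ)]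
      calc (∫⁻ y, ENNReal.ofReal (F ξ y))
          ≤ ∫⁻ y, ENNReal.ofReal (Γ x ξ (t - σ)) * (ENNReal.ofReal (Γ ξ y σ) * ENNReal.ofReal B) :=
            lintegral_mono this
        _ = ENNReal.ofReal (Γ x ξ (t - σ)) * ((∫⁻ y, ENNReal.ofReal (Γ ξ y σ)) * ENNReal.ofReal B) := by
            rw [lintegral_const_mul' _ _ ENNReal.ofReal_ne_top,
              lintegral_mul_const' _ _ ENNReal.ofReal_ne_top]
        _ = ENNReal.ofReal (Γ x ξ (t - σ)) * ENNReal.ofReal B := by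
            rw [kernel_lintegral hΓ hK1y hΓnn ξ σ hσ, one_mul]
    calc (∫⁻ ξ, ∫⁻ y, ENNReal.ofReal (F ξ y))
        ≤ ∫⁻ ξ, ENNReal.ofReal (Γ x ξ (t - σ)) * ENNReal.ofReal B := lintegral_mono hbound
      _ = 1 * ENNReal.ofReal B := by
          rw [lintegral_mul_const' _ _ ENNReal.ofReal_ne_top,
            kernel_lintegral hΓ hK1y hΓnn x (t - σ) hts]
      _ < ⊤ := by simp [ENNReal.ofReal_lt_top]
  calc ∫ ξ, Γ x ξ (t - σ) * ∫ y, Γ ξ y σ * φ y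
      = ∫ ξ, ∫ y, F ξ y := by
        congr 1; funext ξ
        rw [hF]
        exact (integral_const_mul _ _).symm
    _ = ∫ y, ∫ ξ, F ξ y := integral_integral_swap hFint
    _ = ∫ y, Γ x y t * φ y := by
        congr 1; funext y
        rw [hK2 x y σ t hσ hσt, ← integral_mul_const]
        congr 1; funext ξ
        rw [hF]; ring

def witer (Γ : EucN N → EucN N → ℝ → ℝ) (u₀ : EucN N → ℝ)
    (h l f g : ℝ → ℝ) : ℕ → ℝ × EucN N → ℝ
  | 0 => fun p => if 0 < p.1 then ∫ z, Γ p.2 z p.1 * u₀ z else 0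
  | (k+1) => fun p => if 0 < p.1 then
      (∫ z, Γ p.2 z p.1 * u₀ z) +
      ∫ τ, (Ioc (0:ℝ) p.1).indicator
        (fun τ' => ∫ z, Γ p.2 z (p.1 - τ') *
          (h τ' * f (witer Γ u₀ h l f g k (τ', z)) +
           l τ' * g (witer Γ u₀ h l f g k (τ', z)))) τ
      else 0

lemma witer_measurable (Γ : EucN N → EucN N → ℝ → ℝ)
    (hΓ : Measurable fun p : EucN N × EucN N × ℝ => Γ p.1 p.2.1 p.2.2)
    (u₀ : EucN N → ℝ) (hu₀ : Continuous u₀)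
    (h l f g : ℝ → ℝ) (hh : Continuous h) (hl : Continuous l)
    (hf : Continuous f) (hg : Continuous g) :
    ∀ k, Measurable (witer Γ u₀ h l f g k) := by
  have meas0 : Measurable fun p : ℝ × EucN N => ∫ z, Γ p.2 z p.1 * u₀ z := by
    have : Measurable fun q : (ℝ × EucN N) × EucN N => Γ q.1.2 q.2 q.1.1 * u₀ q.2 :=
      (measΓ hΓ measurable_fst.snd measurable_snd measurable_fst.fst).mul
        (hu₀.measurable.comp measurable_snd)
    exact this.stronglyMeasurable.integral_prod_right'.measurable
  intro k
  induction k with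
  | zero =>
      exact Measurable.ite (measurableSet_lt measurable_const measurable_fst) meas0
        measurable_const
  | succ k ih =>
      refine Measurable.ite (measurableSet_lt measurable_const measurable_fst)
        (meas0.add ?_) measurable_const
      have hK : Measurable fun q : (ℝ × EucN N) × ℝ =>
          ∫ z, Γ q.1.2 z (q.1.1 - q.2) *
            (h q.2 * f (witer Γ u₀ h l f g k (q.2, z)) +
             l q.2 * g (witer Γ u₀ h l f g k (q.2, z))) := by
        have hw : Measurable fun r : ((ℝ × EucN N) × ℝ) × EucN N =>
            witer Γ u₀ h l f g k (r.1.2, r.2) :=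
          ih.comp (measurable_fst.snd.prodMk measurable_snd)
        have : Measurable fun r : ((ℝ × EucN N) × ℝ) × EucN N =>
            Γ r.1.1.2 r.2 (r.1.1.1 - r.1.2) *
              (h r.1.2 * f (witer Γ u₀ h l f g k (r.1.2, r.2)) +
               l r.1.2 * g (witer Γ u₀ h l f g k (r.1.2, r.2))) := by
          refine (measΓ hΓ measurable_fst.fst.snd measurable_snd
            (measurable_fst.fst.fst.sub measurable_fst.snd)).mul ?_
          exact ((hh.measurable.comp measurable_fst.snd).mul
              ((hf.measurable).comp hw)).add
            ((hl.measurable.comp measurable_fst.snd).mul ((hg.measurable).comp hw))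
        exact this.stronglyMeasurable.integral_prod_right'.measurable
      have hset : MeasurableSet {q : (ℝ × EucN N) × ℝ | q.2 ∈ Ioc (0:ℝ) q.1.1} := by
        have : {q : (ℝ × EucN N) × ℝ | q.2 ∈ Ioc (0:ℝ) q.1.1}
            = {q : (ℝ × EucN N) × ℝ | 0 < q.2} ∩ {q | q.2 ≤ q.1.1} := by
          ext q; simp [Set.mem_Ioc, and_comm]
        rw [this]
        exact (measurableSet_lt measurable_const measurable_snd).inter
          (measurableSet_le measurable_snd measurable_fst.fst)
      have hmain : Measurable fun q : (ℝ × EucN N) × ℝ =>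
          ({q : (ℝ × EucN N) × ℝ | q.2 ∈ Ioc (0:ℝ) q.1.1}).indicator
            (fun q => ∫ z, Γ q.1.2 z (q.1.1 - q.2) *
              (h q.2 * f (witer Γ u₀ h l f g k (q.2, z)) +
               l q.2 * g (witer Γ u₀ h l f g k (q.2, z)))) q :=
        hK.indicator hset
      have heq : (fun p : ℝ × EucN N => ∫ τ, (Ioc (0:ℝ) p.1).indicator
          (fun τ' => ∫ z, Γ p.2 z (p.1 - τ') *
            (h τ' * f (witer Γ u₀ h l f g k (τ', z)) +
             l τ' * g (witer Γ u₀ h l f g k (τ', z)))) τ)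
          = fun p : ℝ × EucN N => ∫ τ,
            ({q : (ℝ × EucN N) × ℝ | q.2 ∈ Ioc (0:ℝ) q.1.1}).indicator
              (fun q => ∫ z, Γ q.1.2 z (q.1.1 - q.2) *
                (h q.2 * f (witer Γ u₀ h l f g k (q.2, z)) +
                 l q.2 * g (witer Γ u₀ h l f g k (q.2, z)))) (p, τ) := by
        funext p
        congr 1
      rw [heq]
      exact hmain.stronglyMeasurable.integral_prod_right'.measurable

end MIB

open MIB in
/-- Monotone iteration bound (3.1) in the proof of Theorem 1.2(i):
the Picard iterates are nonnegative, nondecreasing in `k`, and bounded by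
`(1+β) S(t) u₀`. -/
theorem monotone_iteration_bound
    (N : ℕ) (hN : 1 ≤ N) (α : ℝ) (hα0 : 0 ≤ α) (hα1 : α < 1)
    (Γ : EucN N → EucN N → ℝ → ℝ)
    (hΓmeas : Measurable fun p : EucN N × EucN N × ℝ => Γ p.1 p.2.1 p.2.2)
    (c₀ : ℝ) (hc₀ : 0 < c₀)
    (hK1y : ∀ (x : EucN N) (t : ℝ), 0 < t → ∫ y, Γ x y t = 1)
    (hK1x : ∀ (y : EucN N) (t : ℝ), 0 < t → ∫ x, Γ x y t = 1)
    (hK2 : ∀ (x y : EucN N) (s t : ℝ), 0 < s → s < t →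
      Γ x y t = ∫ ξ, Γ x ξ (t - s) * Γ ξ y s)
    (hK5 : ∀ (x y : EucN N) (t : ℝ), 0 < t →
      0 < Γ x y t ∧ Γ x y t ≤ c₀ * t ^ (-(N : ℝ) / (2 - α)))
    (S : ℝ → CbN N → CbN N)
    (hS0 : ∀ φ, S 0 φ = φ)
    (hSΓ : ∀ (φ : CbN N) (t : ℝ), 0 < t → ∀ x, S t φ x = ∫ y, Γ x y t * φ y)
    (hK4 : ∀ φ : CbN N, ContinuousOn (fun t => S t φ) (Ici (0 : ℝ)))
    (h l : ℝ → ℝ)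
    (hhcont : ContinuousOn h (Ici 0)) (hlcont : ContinuousOn l (Ici 0))
    (hhnn : ∀ t, 0 ≤ t → 0 ≤ h t) (hlnn : ∀ t, 0 ≤ t → 0 ≤ l t)
    (f g : ℝ → ℝ)
    (hfLip : ∀ M > (0 : ℝ), ∃ K : NNReal, LipschitzOnWith K f (Icc 0 M))
    (hgLip : ∀ M > (0 : ℝ), ∃ K : NNReal, LipschitzOnWith K g (Icc 0 M))
    (hfnn : ∀ s, 0 ≤ s → 0 ≤ f s) (hgnn : ∀ s, 0 ≤ s → 0 ≤ g s)
    (hf0 : f 0 = 0) (hg0 : g 0 = 0)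
    (m : ℝ) (hm : 0 < m)
    (hfmono : MonotoneOn f (Ioc 0 m)) (hgmono : MonotoneOn g (Ioc 0 m))
    (hfqmono : MonotoneOn (fun s => f s / s) (Ioc 0 m))
    (hgqmono : MonotoneOn (fun s => g s / s) (Ioc 0 m))
    (v₀ : CbN N) (hv₀nn : ∀ x, 0 ≤ v₀ x) (hv₀ne : v₀ ≠ 0) (hv₀m : ‖v₀‖ ≤ m)
    (β : ℝ) (hβ : 0 < β)
    (hβcond :
      (∫⁻ σ in Ioi (0 : ℝ), ENNReal.ofReal (h σ * f ‖S σ v₀‖ / ‖S σ v₀‖)) +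
      (∫⁻ σ in Ioi (0 : ℝ), ENNReal.ofReal (l σ * g ‖S σ v₀‖ / ‖S σ v₀‖))
        ≤ ENNReal.ofReal (β / (β + 1)))
    (δ : ℝ) (hδ0 : 0 < δ)
    (hδ : δ < (1 / (β + 1)) * min 1 (m / ‖v₀‖))
    -- the Picard iterates with initial data `u₀ = δ v₀`
    (u : ℕ → ℝ → EucN N → ℝ)
    (hiter0 : ∀ t > (0 : ℝ), ∀ x, u 0 t x = S t (δ • v₀) x)
    (hiter : ∀ k : ℕ, ∀ t > (0 : ℝ), ∀ x,
      u (k + 1) t x = S t (δ • v₀) x +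
        ∫ σ in (0 : ℝ)..t, ∫ y, Γ x y (t - σ) *
          (h σ * f (u k σ y) + l σ * g (u k σ y))) :
    ∀ k : ℕ, ∀ t > (0 : ℝ), ∀ x,
      0 ≤ u k t x ∧ u k t x ≤ u (k + 1) t x ∧
        u (k + 1) t x ≤ (1 + β) * S t (δ • v₀) x := by
  -- basic kernel facts
  have hΓpos : ∀ (x y : EucN N) (t : ℝ), 0 < t → 0 < Γ x y t :=
    fun x y t ht => (hK5 x y t ht).1
  have hΓnn : ∀ (x y : EucN N) (t : ℝ), 0 < t → 0 ≤ Γ x y t :=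
    fun x y t ht => (hΓpos x y t ht).le
  have hv₀pos : (0:ℝ) < ‖v₀‖ := norm_pos_iff.mpr hv₀ne
  have hβ1 : (0:ℝ) < β + 1 := by linarith
  -- consequences of the smallness of δ
  have hδ1 : δ * (1 + β) ≤ 1 := by
    have h1 : δ < (1 / (β + 1)) * 1 :=
      lt_of_lt_of_le hδ (mul_le_mul_of_nonneg_left (min_le_left _ _) (by positivity))
    rw [mul_one] at h1
    have h2 : δ * (β + 1) < (1 / (β + 1)) * (β + 1) := mul_lt_mul_of_pos_right h1 hβ1
    have h3 : (1 / (β + 1)) * (β + 1) = 1 := by field_simp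
    nlinarith
  have hδm : δ * (1 + β) * ‖v₀‖ ≤ m := by
    have h1 : δ < (1 / (β + 1)) * (m / ‖v₀‖) :=
      lt_of_lt_of_le hδ (mul_le_mul_of_nonneg_left (min_le_right _ _) (by positivity))
    have h2 : δ * ((β + 1) * ‖v₀‖) < ((1 / (β + 1)) * (m / ‖v₀‖)) * ((β + 1) * ‖v₀‖) :=
      mul_lt_mul_of_pos_right h1 (by positivity)
    have h3 : ((1 / (β + 1)) * (m / ‖v₀‖)) * ((β + 1) * ‖v₀‖) = m := by
      field_simp
    nlinarith
  have hv₀C : ∀ y, v₀ y ≤ ‖v₀‖ := fun y =>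
    (le_abs_self _).trans (by rw [← Real.norm_eq_abs]; exact v₀.norm_coe_le_norm y)
  set φδ : EucN N → ℝ := fun z => δ * v₀ z with hφδdef
  have hφδc : Continuous φδ := continuous_const.mul v₀.continuous
  have hφδnn : ∀ z, 0 ≤ φδ z := fun z => mul_nonneg hδ0.le (hv₀nn z)
  have hφδC : ∀ z, φδ z ≤ δ * ‖v₀‖ := fun z =>
    mul_le_mul_of_nonneg_left (hv₀C z) hδ0.le
  set P : ℝ → EucN N → ℝ := fun t x => ∫ z, Γ x z t * φδ z with hPdef
  have hSmul : ∀ t, 0 < t → ∀ x, S t (δ • v₀) x = P t x := by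
    intro t ht x
    rw [hSΓ _ t ht x]
    simp only [hPdef]
    congr 1
  -- facts about S t v₀
  have hSv : ∀ t, 0 < t → ∀ x, S t v₀ x = ∫ y, Γ x y t * v₀ y :=
    fun t ht x => hSΓ v₀ t ht x
  have hSvnn : ∀ t, 0 < t → ∀ x, 0 ≤ S t v₀ x := by
    intro t ht x
    rw [hSv t ht x]
    exact integral_nonneg fun y => mul_nonneg (hΓnn x y t ht) (hv₀nn y)
  have hSvle : ∀ t, 0 ≤ t → ∀ x, S t v₀ x ≤ ‖v₀‖ := by
    intro t ht x
    rcases ht.eq_or_lt with rfl | ht'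
    · rw [hS0]; exact hv₀C x
    · rw [hSv t ht' x]
      exact MIB.conv_le hΓmeas hK1y hΓnn hv₀nn hv₀C x t ht'
  have hΦm : ∀ t, 0 ≤ t → ‖S t v₀‖ ≤ m := by
    intro t ht
    refine le_trans (BoundedContinuousFunction.norm_le (le_trans hv₀pos.le hv₀m) |>.mpr ?_) le_rfl
    intro x
    rcases ht.eq_or_lt with rfl | ht'
    · rw [hS0]
      rw [Real.norm_eq_abs, abs_of_nonneg (hv₀nn x)]
      exact (hv₀C x).trans hv₀m
    · rw [Real.norm_eq_abs, abs_of_nonneg (hSvnn t ht' x)]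
      exact (hSvle t ht x).trans hv₀m
  have hΦpos : ∀ t, 0 ≤ t → 0 < ‖S t v₀‖ := by
    intro t ht
    rcases ht.eq_or_lt with rfl | ht'
    · rw [hS0]; exact hv₀pos
    · obtain ⟨x₀, hx₀⟩ : ∃ x₀, 0 < v₀ x₀ := by
        by_contra hc
        push_neg at hc
        apply hv₀ne
        ext x
        exact le_antisymm (hc x) (hv₀nn x)
      have hpos : 0 < S t v₀ x₀ := by
        rw [hSv t ht' x₀]
        exact MIB.conv_pos hΓmeas hK1y hΓpos v₀.continuous hv₀nn hv₀C hx₀ x₀ t ht'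
      calc (0:ℝ) < S t v₀ x₀ := hpos
        _ ≤ ‖S t v₀‖ := by
            refine le_trans (le_abs_self _) ?_
            rw [← Real.norm_eq_abs]
            exact (S t v₀).norm_coe_le_norm x₀
  -- facts about P
  have hPsv : ∀ t, 0 < t → ∀ x, P t x = δ * S t v₀ x := by
    intro t ht x
    rw [hSv t ht x, ← integral_const_mul]
    simp only [hPdef]
    congr 1; funext z
    simp only [hφδdef]; ring
  have hPnn : ∀ t, 0 < t → ∀ x, 0 ≤ P t x := by
    intro t ht x
    exact integral_nonneg fun z => mul_nonneg (hΓnn x z t ht) (hφδnn z)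
  have hPle : ∀ t, 0 < t → ∀ x, P t x ≤ δ * ‖v₀‖ := by
    intro t ht x
    exact MIB.conv_le hΓmeas hK1y hΓnn hφδnn hφδC x t ht
  have hPm : ∀ t, 0 < t → ∀ x, (1 + β) * P t x ≤ ‖S t v₀‖ := by
    intro t ht x
    have h1 : P t x ≤ δ * ‖S t v₀‖ := by
      rw [hPsv t ht x]
      refine mul_le_mul_of_nonneg_left ?_ hδ0.le
      refine le_trans (le_abs_self _) ?_
      rw [← Real.norm_eq_abs]
      exact (S t v₀).norm_coe_le_norm x
    calc (1 + β) * P t x ≤ (1 + β) * (δ * ‖S t v₀‖) :=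
          mul_le_mul_of_nonneg_left h1 (by linarith)
      _ = (δ * (1 + β)) * ‖S t v₀‖ := by ring
      _ ≤ 1 * ‖S t v₀‖ := mul_le_mul_of_nonneg_right hδ1 (norm_nonneg _)
      _ = ‖S t v₀‖ := one_mul _
  -- extended nonlinearities
  obtain ⟨Kf, hKf⟩ := hfLip m hm
  obtain ⟨Kg, hKg⟩ := hgLip m hm
  have hfcont : ContinuousOn f (Icc 0 m) := hKf.continuousOn
  have hgcont : ContinuousOn g (Icc 0 m) := hKg.continuousOn
  set fc : ℝ → ℝ := fun s => f (MIB.clamp m s) with hfcdef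
  set gc : ℝ → ℝ := fun s => g (MIB.clamp m s) with hgcdef
  have hfcc : Continuous fc := hfcont.comp_continuous (MIB.continuous_clamp m)
    (fun s => ⟨MIB.clamp_nonneg m s, MIB.clamp_le hm.le s⟩)
  have hgcc : Continuous gc := hgcont.comp_continuous (MIB.continuous_clamp m)
    (fun s => ⟨MIB.clamp_nonneg m s, MIB.clamp_le hm.le s⟩)
  set hcon : ℝ → ℝ := fun τ => h (max τ 0) with hhcdef
  set lcon : ℝ → ℝ := fun τ => l (max τ 0) with hlcdef
  have hhcc : Continuous hcon := hhcont.comp_continuous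
    (continuous_id.max continuous_const) (fun τ => mem_Ici.mpr (le_max_right τ 0))
  have hlcc : Continuous lcon := hlcont.comp_continuous
    (continuous_id.max continuous_const) (fun τ => mem_Ici.mpr (le_max_right τ 0))
  have hconeq : ∀ τ : ℝ, 0 ≤ τ → hcon τ = h τ ∧ lcon τ = l τ := by
    intro τ hτ
    constructor <;> simp [hhcdef, hlcdef, max_eq_left hτ]
  -- general monotonicity facts
  have hgmon : ∀ (f : ℝ → ℝ), (∀ s, 0 ≤ s → 0 ≤ f s) → f 0 = 0 →
      MonotoneOn f (Ioc 0 m) →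
      ∀ a b, 0 ≤ a → a ≤ b → b ≤ m → f a ≤ f b := by
    intro f hfnn hf0 hmono a b ha hab hbm
    rcases ha.eq_or_lt with h0 | h0
    · rw [← h0, hf0]
      exact hfnn b (ha.trans hab)
    · exact hmono ⟨h0, hab.trans hbm⟩ ⟨h0.trans_le hab, hbm⟩ hab
  have hkey : ∀ (f : ℝ → ℝ), (∀ s, 0 ≤ s → 0 ≤ f s) → f 0 = 0 →
      MonotoneOn (fun s => f s / s) (Ioc 0 m) →
      ∀ M a A, 0 < M → M ≤ m → 0 ≤ a → a ≤ A → A ≤ M →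
        f a ≤ f M / M * A := by
    intro f hfnn hf0 hq M a A hM hMm ha haA hAM
    rcases ha.eq_or_lt with h0 | h0
    · rw [← h0, hf0]
      exact mul_nonneg (div_nonneg (hfnn M hM.le) hM.le) (ha.trans haA)
    · have ham : a ≤ M := haA.trans hAM
      have hq' : f a / a ≤ f M / M := hq ⟨h0, ham.trans hMm⟩ ⟨hM, hMm⟩ ham
      have heq : f a = f a / a * a := (div_mul_cancel₀ _ h0.ne').symm
      rw [heq]
      calc f a / a * a ≤ f M / M * a := mul_le_mul_of_nonneg_right hq' ha
        _ ≤ f M / M * A := mul_le_mul_of_nonneg_left haA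
            (div_nonneg (hfnn M hM.le) hM.le)
  -- the iterates
  set w : ℕ → ℝ × EucN N → ℝ := MIB.witer Γ φδ hcon lcon fc gc with hwdef
  have hwmeas : ∀ k, Measurable (w k) :=
    MIB.witer_measurable Γ hΓmeas φδ hφδc hcon lcon fc gc hhcc hlcc hfcc hgcc
  set G : ℕ → ℝ → EucN N → ℝ → ℝ := fun k t x τ =>
    ∫ z, Γ x z (t - τ) * (hcon τ * fc (w k (τ, z)) + lcon τ * gc (w k (τ, z)))
    with hGdef
  have hW0 : ∀ t, 0 < t → ∀ x, w 0 (t, x) = P t x := by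
    intro t ht x
    simp only [hwdef, MIB.witer, if_pos ht, hPdef]
  have hW1 : ∀ k t, 0 < t → ∀ x,
      w (k+1) (t, x) = P t x + ∫ τ, (Ioc (0:ℝ) t).indicator (G k t x) τ := by
    intro k t ht x
    simp only [hwdef, MIB.witer, if_pos ht, hGdef, hPdef]
  have hGmeas : ∀ k t x, Measurable (G k t x) := by
    intro k t x
    have hj : Measurable fun q : ℝ × EucN N =>
        Γ x q.2 (t - q.1) * (hcon q.1 * fc (w k q) + lcon q.1 * gc (w k q)) := by
      refine (MIB.measΓ hΓmeas measurable_const measurable_snd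
        (measurable_const.sub measurable_fst)).mul ?_
      exact ((hhcc.measurable.comp measurable_fst).mul
          (hfcc.measurable.comp (hwmeas k))).add
        ((hlcc.measurable.comp measurable_fst).mul (hgcc.measurable.comp (hwmeas k)))
    exact hj.stronglyMeasurable.integral_prod_right'.measurable
  -- the quantities appearing in the β-condition
  set q1 : ℝ → ℝ := fun σ => h σ * f ‖S σ v₀‖ / ‖S σ v₀‖ with hq1def
  set q2 : ℝ → ℝ := fun σ => l σ * g ‖S σ v₀‖ / ‖S σ v₀‖ with hq2def
  have hΦcont : ContinuousOn (fun σ => ‖S σ v₀‖) (Ici 0) := (hK4 v₀).norm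
  have hq1cont : ContinuousOn q1 (Ici 0) := by
    refine ContinuousOn.div (hhcont.mul ?_) hΦcont (fun σ hσ => (hΦpos σ hσ).ne')
    exact hfcont.comp hΦcont (fun σ hσ => ⟨norm_nonneg _, hΦm σ hσ⟩)
  have hq2cont : ContinuousOn q2 (Ici 0) := by
    refine ContinuousOn.div (hlcont.mul ?_) hΦcont (fun σ hσ => (hΦpos σ hσ).ne')
    exact hgcont.comp hΦcont (fun σ hσ => ⟨norm_nonneg _, hΦm σ hσ⟩)
  have hq1nn : ∀ σ, 0 ≤ σ → 0 ≤ q1 σ := fun σ hσ =>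
    div_nonneg (mul_nonneg (hhnn σ hσ) (hfnn _ (norm_nonneg _))) (norm_nonneg _)
  have hq2nn : ∀ σ, 0 ≤ σ → 0 ≤ q2 σ := fun σ hσ =>
    div_nonneg (mul_nonneg (hlnn σ hσ) (hgnn _ (norm_nonneg _))) (norm_nonneg _)
  have hq1int : ∀ t, 0 < t → IntegrableOn q1 (Ioc 0 t) := by
    intro t ht
    exact ((hq1cont.mono (fun σ (hσ : σ ∈ Icc (0:ℝ) t) => hσ.1)).integrableOn_Icc).mono_set
      Ioc_subset_Icc_self
  have hq2int : ∀ t, 0 < t → IntegrableOn q2 (Ioc 0 t) := by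
    intro t ht
    exact ((hq2cont.mono (fun σ (hσ : σ ∈ Icc (0:ℝ) t) => hσ.1)).integrableOn_Icc).mono_set
      Ioc_subset_Icc_self
  have hqsum : ∀ t, 0 < t → ∫ σ in Ioc (0:ℝ) t, (q1 σ + q2 σ) ≤ β / (β + 1) := by
    intro t ht
    have hnn : 0 ≤ᵐ[volume.restrict (Ioc (0:ℝ) t)] fun σ => q1 σ + q2 σ := by
      refine (ae_restrict_iff' measurableSet_Ioc).2 (Filter.Eventually.of_forall fun σ hσ => ?_)
      exact add_nonneg (hq1nn σ hσ.1.le) (hq2nn σ hσ.1.le)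
    have hmeas1 : AEMeasurable (fun σ => ENNReal.ofReal (q1 σ))
        (volume.restrict (Ioc (0:ℝ) t)) :=
      ENNReal.measurable_ofReal.comp_aemeasurable
        ((hq1cont.mono (fun σ hσ => hσ.1.le)).aemeasurable measurableSet_Ioc)
    have hofReal : ENNReal.ofReal (∫ σ in Ioc (0:ℝ) t, (q1 σ + q2 σ)) ≤
        ENNReal.ofReal (β / (β + 1)) := by
      calc ENNReal.ofReal (∫ σ in Ioc (0:ℝ) t, (q1 σ + q2 σ))
          ≤ ∫⁻ σ in Ioc (0:ℝ) t, ENNReal.ofReal (q1 σ + q2 σ) :=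
            le_of_eq (ofReal_integral_eq_lintegral_ofReal ((hq1int t ht).add (hq2int t ht)) hnn)
        _ ≤ ∫⁻ σ in Ioc (0:ℝ) t,
              (ENNReal.ofReal (q1 σ) + ENNReal.ofReal (q2 σ)) :=
            lintegral_mono fun σ => ENNReal.ofReal_add_le
        _ = (∫⁻ σ in Ioc (0:ℝ) t, ENNReal.ofReal (q1 σ)) +
              ∫⁻ σ in Ioc (0:ℝ) t, ENNReal.ofReal (q2 σ) :=
            lintegral_add_left' hmeas1 _
        _ ≤ (∫⁻ σ in Ioi (0:ℝ), ENNReal.ofReal (q1 σ)) +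
              ∫⁻ σ in Ioi (0:ℝ), ENNReal.ofReal (q2 σ) :=
            add_le_add (lintegral_mono_set Ioc_subset_Ioi_self)
              (lintegral_mono_set Ioc_subset_Ioi_self)
        _ ≤ ENNReal.ofReal (β / (β + 1)) := hβcond
    exact (ENNReal.ofReal_le_ofReal_iff (by positivity)).1 hofReal
  -- pointwise facts about the nonlinearities
  have hconnn : ∀ τ, 0 ≤ hcon τ := fun τ => hhnn _ (le_max_right _ _)
  have hlconnn : ∀ τ, 0 ≤ lcon τ := fun τ => hlnn _ (le_max_right _ _)
  have hfcnn : ∀ s, 0 ≤ fc s := fun s => hfnn _ (MIB.clamp_nonneg m s)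
  have hgcnn : ∀ s, 0 ≤ gc s := fun s => hgnn _ (MIB.clamp_nonneg m s)
  have hfcle : ∀ s, fc s ≤ f m := fun s =>
    hgmon f hfnn hf0 hfmono _ m (MIB.clamp_nonneg m s) (MIB.clamp_le hm.le s) le_rfl
  have hgcle : ∀ s, gc s ≤ g m := fun s =>
    hgmon g hgnn hg0 hgmono _ m (MIB.clamp_nonneg m s) (MIB.clamp_le hm.le s) le_rfl
  have hfcmono : ∀ s s', s ≤ s' → fc s ≤ fc s' := fun s s' hss' =>
    hgmon f hfnn hf0 hfmono _ _ (MIB.clamp_nonneg m s) (MIB.clamp_mono m hss')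
      (MIB.clamp_le hm.le s')
  have hgcmono : ∀ s s', s ≤ s' → gc s ≤ gc s' := fun s s' hss' =>
    hgmon g hgnn hg0 hgmono _ _ (MIB.clamp_nonneg m s) (MIB.clamp_mono m hss')
      (MIB.clamp_le hm.le s')
  have hFnn : ∀ τ (s : ℝ), 0 ≤ hcon τ * fc s + lcon τ * gc s := fun τ s =>
    add_nonneg (mul_nonneg (hconnn τ) (hfcnn s)) (mul_nonneg (hlconnn τ) (hgcnn s))
  have hFle : ∀ τ (s : ℝ), hcon τ * fc s + lcon τ * gc s ≤ hcon τ * f m + lcon τ * g m :=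
    fun τ s => add_le_add (mul_le_mul_of_nonneg_left (hfcle s) (hconnn τ))
      (mul_le_mul_of_nonneg_left (hgcle s) (hlconnn τ))
  -- pointwise facts about G
  have hGnn : ∀ k t x τ, 0 < τ → τ < t → 0 ≤ G k t x τ := by
    intro k t x τ hτ hτt
    exact integral_nonneg fun z => mul_nonneg (hΓnn _ _ _ (by linarith)) (hFnn τ _)
  have hGleC : ∀ k t x τ, 0 < τ → τ < t →
      G k t x τ ≤ hcon τ * f m + lcon τ * g m := by
    intro k t x τ hτ hτt
    exact MIB.conv_le hΓmeas hK1y hΓnn (fun z => hFnn τ _) (fun z => hFle τ _)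
      x (t - τ) (by linarith)
  have hPmeas : ∀ τ : ℝ, Measurable fun z => P τ z := fun τ =>
    MIB.conv_measurable hΓmeas hφδc.measurable τ
  have hsemi : ∀ (t : ℝ) x τ, 0 < τ → τ < t → ∫ z, Γ x z (t - τ) * P τ z = P t x := by
    intro t x τ hτ hτt
    exact MIB.kernel_semigroup hΓmeas hK1y hK2 hΓnn φδ hφδc.measurable hφδnn
      (δ * ‖v₀‖) hφδC x t τ hτ hτt
  have hGle_q : ∀ k (t : ℝ) x τ, 0 < τ → τ < t →
      (∀ z, w k (τ, z) ≤ (1 + β) * P τ z) →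
      G k t x τ ≤ (q1 τ + q2 τ) * ((1 + β) * P t x) := by
    intro k t x τ hτ hτt Hub
    have hττ : (0:ℝ) ≤ τ := hτ.le
    have hM : 0 < ‖S τ v₀‖ := hΦpos τ hττ
    have hMm : ‖S τ v₀‖ ≤ m := hΦm τ hττ
    have hq12 : 0 ≤ q1 τ + q2 τ := add_nonneg (hq1nn τ hττ) (hq2nn τ hττ)
    have hc' : 0 < t - τ := by linarith
    have hpt : ∀ z, hcon τ * fc (w k (τ, z)) + lcon τ * gc (w k (τ, z)) ≤
        (q1 τ + q2 τ) * ((1 + β) * P τ z) := by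
      intro z
      have hA : (1 + β) * P τ z ≤ ‖S τ v₀‖ := hPm τ hτ z
      have hAnn : 0 ≤ (1 + β) * P τ z := mul_nonneg (by linarith) (hPnn τ hτ z)
      have hclampA : MIB.clamp m (w k (τ, z)) ≤ (1 + β) * P τ z :=
        max_le hAnn ((min_le_left _ _).trans (Hub z))
      have hf' : fc (w k (τ, z)) ≤ f ‖S τ v₀‖ / ‖S τ v₀‖ * ((1 + β) * P τ z) :=
        hkey f hfnn hf0 hfqmono _ _ _ hM hMm (MIB.clamp_nonneg _ _) hclampA hA
      have hg' : gc (w k (τ, z)) ≤ g ‖S τ v₀‖ / ‖S τ v₀‖ * ((1 + β) * P τ z) :=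
        hkey g hgnn hg0 hgqmono _ _ _ hM hMm (MIB.clamp_nonneg _ _) hclampA hA
      calc hcon τ * fc (w k (τ, z)) + lcon τ * gc (w k (τ, z))
          ≤ hcon τ * (f ‖S τ v₀‖ / ‖S τ v₀‖ * ((1 + β) * P τ z)) +
            lcon τ * (g ‖S τ v₀‖ / ‖S τ v₀‖ * ((1 + β) * P τ z)) :=
            add_le_add (mul_le_mul_of_nonneg_left hf' (hconnn τ))
              (mul_le_mul_of_nonneg_left hg' (hlconnn τ))
        _ = (q1 τ + q2 τ) * ((1 + β) * P τ z) := by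
            rw [(hconeq τ hττ).1, (hconeq τ hττ).2, hq1def, hq2def]; ring
    calc G k t x τ
        ≤ ∫ z, Γ x z (t - τ) * ((q1 τ + q2 τ) * ((1 + β) * P τ z)) := by
          refine integral_mono_of_nonneg
            (Filter.Eventually.of_forall fun z => mul_nonneg (hΓnn _ _ _ hc') (hFnn τ _)) ?_
            (Filter.Eventually.of_forall fun z =>
              mul_le_mul_of_nonneg_left (hpt z) (hΓnn _ _ _ hc'))
          exact MIB.conv_integrable hΓmeas hK1y hΓnn
            (measurable_const.mul (measurable_const.mul (hPmeas τ)))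
            (fun z => mul_nonneg hq12 (mul_nonneg (by linarith) (hPnn τ hτ z)))
            (C := (q1 τ + q2 τ) * ((1 + β) * (δ * ‖v₀‖)))
            (fun z => mul_le_mul_of_nonneg_left
              (mul_le_mul_of_nonneg_left (hPle τ hτ z) (by linarith)) hq12)
            x (t - τ) hc'
      _ = (q1 τ + q2 τ) * ((1 + β) * P t x) := by
          have hre : (fun z => Γ x z (t - τ) * ((q1 τ + q2 τ) * ((1 + β) * P τ z)))
              = fun z => ((q1 τ + q2 τ) * (1 + β)) * (Γ x z (t - τ) * P τ z) := by
            funext z; ring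
          rw [hre, integral_const_mul, hsemi t x τ hτ hτt]
          ring
  -- almost-everywhere avoidance of the endpoint
  have haet : ∀ t : ℝ, ∀ᵐ τ : ℝ, τ ≠ t := by
    intro t
    have : volume ({t} : Set ℝ) = 0 := Real.volume_singleton
    have h2 := measure_eq_zero_iff_ae_notMem.mp this
    filter_upwards [h2] with τ hτ
    simpa using hτ
  -- the indicator integrals
  have hIndNN : ∀ k (t : ℝ) x, 0 < t →
      0 ≤ ∫ τ, (Ioc (0:ℝ) t).indicator (G k t x) τ := by
    intro k t x ht
    refine integral_nonneg_of_ae ?_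
    filter_upwards [haet t] with τ hτ
    by_cases hmem : τ ∈ Ioc (0:ℝ) t
    · rw [indicator_of_mem hmem]
      exact hGnn k t x τ hmem.1 (lt_of_le_of_ne hmem.2 hτ)
    · simp [indicator_of_notMem hmem]
  have hIndInt : ∀ k (t : ℝ) x, 0 < t →
      Integrable ((Ioc (0:ℝ) t).indicator (G k t x)) := by
    intro k t x ht
    rw [integrable_indicator_iff measurableSet_Ioc]
    refine Integrable.mono' (g := fun τ => hcon τ * f m + lcon τ * g m)
      (((hhcc.mul continuous_const).add (hlcc.mul continuous_const)).continuousOn.integrableOn_Icc.mono_set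
        Ioc_subset_Icc_self)
      ((hGmeas k t x).aestronglyMeasurable.restrict) ?_
    have h1 : ∀ᵐ τ ∂volume.restrict (Ioc (0:ℝ) t), τ ∈ Ioc (0:ℝ) t :=
      ae_restrict_mem measurableSet_Ioc
    have h2 : ∀ᵐ τ ∂volume.restrict (Ioc (0:ℝ) t), τ ≠ t := ae_restrict_of_ae (haet t)
    filter_upwards [h1, h2] with τ hmem hne
    have hτt : τ < t := lt_of_le_of_ne hmem.2 hne
    rw [Real.norm_eq_abs, abs_of_nonneg (hGnn k t x τ hmem.1 hτt)]
    exact hGleC k t x τ hmem.1 hτt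
  have hIndUB : ∀ k (t : ℝ) x, 0 < t →
      (∀ τ, 0 < τ → ∀ z, w k (τ, z) ≤ (1 + β) * P τ z) →
      ∫ τ, (Ioc (0:ℝ) t).indicator (G k t x) τ ≤ β * P t x := by
    intro k t x ht Hub
    have step1 : ∫ τ, (Ioc (0:ℝ) t).indicator (G k t x) τ ≤
        ∫ τ, (Ioc (0:ℝ) t).indicator (fun τ => (q1 τ + q2 τ) * ((1 + β) * P t x)) τ := by
      refine integral_mono_of_nonneg ?_ ?_ ?_
      · filter_upwards [haet t] with τ hτ
        by_cases hmem : τ ∈ Ioc (0:ℝ) t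
        · rw [indicator_of_mem hmem]
          exact hGnn k t x τ hmem.1 (lt_of_le_of_ne hmem.2 hτ)
        · simp [indicator_of_notMem hmem]
      · rw [integrable_indicator_iff measurableSet_Ioc]
        exact ((hq1int t ht).add (hq2int t ht)).mul_const _
      · filter_upwards [haet t] with τ hτ
        by_cases hmem : τ ∈ Ioc (0:ℝ) t
        · rw [indicator_of_mem hmem, indicator_of_mem hmem]
          exact hGle_q k t x τ hmem.1 (lt_of_le_of_ne hmem.2 hτ) (Hub τ hmem.1)
        · simp [indicator_of_notMem hmem]
    have step2 : ∫ τ, (Ioc (0:ℝ) t).indicator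
        (fun τ => (q1 τ + q2 τ) * ((1 + β) * P t x)) τ ≤ β * P t x := by
      rw [integral_indicator measurableSet_Ioc, integral_mul_const]
      have h1 : (∫ τ in Ioc (0:ℝ) t, (q1 τ + q2 τ)) * ((1 + β) * P t x) ≤
          (β / (β + 1)) * ((1 + β) * P t x) :=
        mul_le_mul_of_nonneg_right (hqsum t ht)
          (mul_nonneg (by linarith) (hPnn t ht x))
      have h2 : (β / (β + 1)) * ((1 + β) * P t x) = β * P t x := by
        field_simp; ring
      linarith
    linarith
  have hIndMono : ∀ k (t : ℝ) x, 0 < t →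
      (∀ τ, 0 < τ → ∀ z, w k (τ, z) ≤ w (k+1) (τ, z)) →
      ∫ τ, (Ioc (0:ℝ) t).indicator (G k t x) τ ≤
        ∫ τ, (Ioc (0:ℝ) t).indicator (G (k+1) t x) τ := by
    intro k t x ht Hmono
    refine integral_mono_of_nonneg ?_ (hIndInt (k+1) t x ht) ?_
    · filter_upwards [haet t] with τ hτ
      by_cases hmem : τ ∈ Ioc (0:ℝ) t
      · rw [indicator_of_mem hmem]
        exact hGnn k t x τ hmem.1 (lt_of_le_of_ne hmem.2 hτ)
      · simp [indicator_of_notMem hmem]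
    · filter_upwards [haet t] with τ hτ
      by_cases hmem : τ ∈ Ioc (0:ℝ) t
      · rw [indicator_of_mem hmem, indicator_of_mem hmem]
        have hτ0 : 0 < τ := hmem.1
        have hτt : τ < t := lt_of_le_of_ne hmem.2 hτ
        have hc' : 0 < t - τ := by linarith
        refine integral_mono_of_nonneg
          (Filter.Eventually.of_forall fun z => mul_nonneg (hΓnn _ _ _ hc') (hFnn τ _)) ?_
          (Filter.Eventually.of_forall fun z => ?_)
        · refine MIB.conv_integrable hΓmeas hK1y hΓnn ?_ (fun z => hFnn τ _)
            (fun z => hFle τ _) x (t - τ) hc'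
          have hwz : Measurable fun z : EucN N => w (k+1) (τ, z) :=
            (hwmeas (k+1)).comp (measurable_const.prodMk measurable_id)
          exact ((measurable_const.mul (hfcc.measurable.comp hwz)).add
            (measurable_const.mul (hgcc.measurable.comp hwz)))
        · refine mul_le_mul_of_nonneg_left ?_ (hΓnn _ _ _ hc')
          exact add_le_add
            (mul_le_mul_of_nonneg_left (hfcmono _ _ (Hmono τ hτ0 z)) (hconnn τ))
            (mul_le_mul_of_nonneg_left (hgcmono _ _ (Hmono τ hτ0 z)) (hlconnn τ))
      · simp [indicator_of_notMem hmem]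
  -- the main induction
  have J : ∀ k, ∀ t : ℝ, 0 < t → ∀ x, 0 ≤ w k (t, x) ∧ w k (t, x) ≤ w (k+1) (t, x) ∧
      w (k+1) (t, x) ≤ (1 + β) * P t x := by
    intro k
    induction k with
    | zero =>
        intro t ht x
        have h0 : w 0 (t, x) = P t x := hW0 t ht x
        have h1 : w 1 (t, x) = P t x + ∫ τ, (Ioc (0:ℝ) t).indicator (G 0 t x) τ :=
          hW1 0 t ht x
        have hub : ∀ τ, 0 < τ → ∀ z, w 0 (τ, z) ≤ (1 + β) * P τ z := by
          intro τ hτ z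
          rw [hW0 τ hτ z]
          nlinarith [hPnn τ hτ z]
        refine ⟨?_, ?_, ?_⟩
        · rw [h0]; exact hPnn t ht x
        · rw [h0, h1]; linarith [hIndNN 0 t x ht]
        · rw [h1]
          have := hIndUB 0 t x ht hub
          have := hPnn t ht x
          linarith
    | succ k ih =>
        intro t ht x
        have hub_k1 : ∀ τ, 0 < τ → ∀ z, w (k+1) (τ, z) ≤ (1 + β) * P τ z :=
          fun τ hτ z => (ih τ hτ z).2.2
        have hmono_k : ∀ τ, 0 < τ → ∀ z, w k (τ, z) ≤ w (k+1) (τ, z) :=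
          fun τ hτ z => (ih τ hτ z).2.1
        refine ⟨le_trans (ih t ht x).1 (ih t ht x).2.1, ?_, ?_⟩
        · rw [hW1 k t ht x, hW1 (k+1) t ht x]
          have := hIndMono k t x ht hmono_k
          linarith
        · rw [hW1 (k+1) t ht x]
          have := hIndUB (k+1) t x ht hub_k1
          have := hPnn t ht x
          linarith
  -- identification of the iterates
  have hwm_bound : ∀ k (τ : ℝ), 0 < τ → ∀ z, 0 ≤ w k (τ, z) ∧ w k (τ, z) ≤ m := by
    intro k τ hτ z
    obtain ⟨h1, h2, h3⟩ := J k τ hτ z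
    refine ⟨h1, ?_⟩
    calc w k (τ, z) ≤ (1 + β) * P τ z := h2.trans h3
      _ ≤ (1 + β) * (δ * ‖v₀‖) :=
        mul_le_mul_of_nonneg_left (hPle τ hτ z) (by linarith)
      _ = δ * (1 + β) * ‖v₀‖ := by ring
      _ ≤ m := hδm
  have hueq : ∀ k (t : ℝ), 0 < t → ∀ x, u k t x = w k (t, x) := by
    intro k
    induction k with
    | zero =>
        intro t ht x
        rw [hiter0 t ht x, hSmul t ht x, hW0 t ht x]
    | succ k ih =>
        intro t ht x
        rw [hiter k t ht x, hSmul t ht x, hW1 k t ht x]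
        congr 1
        rw [intervalIntegral.integral_of_le ht.le, ← integral_indicator measurableSet_Ioc]
        congr 1
        funext τ
        by_cases hmem : τ ∈ Ioc (0:ℝ) t
        · rw [indicator_of_mem hmem, indicator_of_mem hmem]
          have hbb := fun y => hwm_bound k τ hmem.1 y
          have hint : ∀ y, h τ * f (u k τ y) + l τ * g (u k τ y) =
              hcon τ * fc (w k (τ, y)) + lcon τ * gc (w k (τ, y)) := by
            intro y
            rw [ih τ hmem.1 y, (hconeq τ hmem.1.le).1, (hconeq τ hmem.1.le).2,
              hfcdef, hgcdef]
            simp only []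
            rw [MIB.clamp_eq (hbb y).1 (hbb y).2]
          congr 1
          funext y
          rw [hint y]
        · simp [indicator_of_notMem hmem]
  -- conclusion
  intro k t ht x
  obtain ⟨h1, h2, h3⟩ := J k t ht x
  refine ⟨?_, ?_, ?_⟩
  · rw [hueq k t ht x]; exact h1
  · rw [hueq k t ht x, hueq (k+1) t ht x]; exact h2
  · rw [hueq (k+1) t ht x, hSmul t ht x]; exact h3
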